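/- arXiv:1806.05371 — 6 statements merged into one kernel-verified Lean document; each statement's English description precedes it below -/
import Mathlib

section
/- For every integer p ≥ 3, the sum ∑_{l=2}^{p-1} p/(l(l-1)(p-l)) is strictly less than 3. -/
lemma tele_sum (n : ℕ) (hn : 1 ≤ n) :
    ∑ l ∈ Finset.Icc 2 n, (1 / ((l : ℝ) * ((l : ℝ) - 1))) = 1 - 1 / n := by
  induction n with
  | zero => omega
  | succ n ih =>
    rcases Nat.lt_or_ge n 1 with h | h
    · interval_cases n
      · simp
    · rw [Finset.sum_Icc_succ_top (by omega), ih h]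
      have hn0 : (0:ℝ) < n := by exact_mod_cast h
      push_cast
      field_simp [hn0.ne']
      ring

/-- For every integer `p ≥ 3`, the sum `∑_{l=2}^{p-1} p/(l(l-1)(p-l))` is strictly
less than `3`. -/
theorem sum_p_div_lt_three (p : ℕ) (hp : 3 ≤ p) :
    ∑ l ∈ Finset.Icc 2 (p - 1),
      (p : ℝ) / ((l : ℝ) * ((l : ℝ) - 1) * ((p : ℝ) - (l : ℝ))) < 3 := by
  have hp1 : (2:ℝ) ≤ (p:ℝ) - 1 := by
    have : (3:ℝ) ≤ p := by exact_mod_cast hp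
    linarith
  have key : ∀ l ∈ Finset.Icc 2 (p - 1),
      (p : ℝ) / ((l : ℝ) * ((l : ℝ) - 1) * ((p : ℝ) - (l : ℝ)))
        = 1 / ((l : ℝ) * ((l : ℝ) - 1)) + 1 / (((l : ℝ) - 1) * ((p : ℝ) - l)) := by
    intro l hl
    simp only [Finset.mem_Icc] at hl
    have h2 : (2:ℝ) ≤ (l:ℝ) := by exact_mod_cast hl.1
    have h3 : (l:ℝ) + 1 ≤ (p:ℝ) := by
      have : l + 1 ≤ p := by omega
      exact_mod_cast this
    have hl0 : (l:ℝ) ≠ 0 := by linarith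
    have hl1 : (l:ℝ) - 1 ≠ 0 := by linarith
    have hpl : (p:ℝ) - l ≠ 0 := by linarith
    field_simp
    ring
  rw [Finset.sum_congr rfl key, Finset.sum_add_distrib]
  have h1 : ∑ l ∈ Finset.Icc 2 (p - 1), (1 / ((l : ℝ) * ((l : ℝ) - 1)))
      = 1 - 1 / ((p:ℝ) - 1) := by
    rw [tele_sum (p - 1) (by omega)]
    have : ((p - 1 : ℕ) : ℝ) = (p:ℝ) - 1 := by
      have : (1:ℕ) ≤ p := by omega
      push_cast [this]; ring
    rw [this]
  have h2 : ∑ l ∈ Finset.Icc 2 (p - 1), (1 / (((l : ℝ) - 1) * ((p : ℝ) - l)))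
      ≤ (p - 2 : ℕ) * (2 / ((p:ℝ) - 1)) := by
    have card : (Finset.Icc 2 (p - 1)).card = p - 2 := by
      rw [Nat.card_Icc]; omega
    calc ∑ l ∈ Finset.Icc 2 (p - 1), (1 / (((l : ℝ) - 1) * ((p : ℝ) - l)))
        ≤ ∑ _l ∈ Finset.Icc 2 (p - 1), (2 / ((p:ℝ) - 1)) := by
          apply Finset.sum_le_sum
          intro l hl
          simp only [Finset.mem_Icc] at hl
          have ha : (1:ℝ) ≤ (l:ℝ) - 1 := by
            have : (2:ℝ) ≤ (l:ℝ) := by exact_mod_cast hl.1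
            linarith
          have hb : (1:ℝ) ≤ (p:ℝ) - l := by
            have : l + 1 ≤ p := by omega
            have : (l:ℝ) + 1 ≤ (p:ℝ) := by exact_mod_cast this
            linarith
          rw [div_le_div_iff₀ (by nlinarith) (by linarith)]
          nlinarith [mul_le_mul ha hb (by linarith) (by linarith)]
      _ = (p - 2 : ℕ) * (2 / ((p:ℝ) - 1)) := by
          rw [Finset.sum_const, card, nsmul_eq_mul]
  have hc : ((p - 2 : ℕ) : ℝ) = (p:ℝ) - 2 := by
    have : (2:ℕ) ≤ p := by omega
    push_cast [this]; ring
  rw [hc] at h2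
  have hpos : (0:ℝ) < (p:ℝ) - 1 := by linarith
  have : ((p:ℝ) - 2) * (2 / ((p:ℝ) - 1)) = 2 - 2 / ((p:ℝ) - 1) := by
    field_simp; ring
  rw [this] at h2
  have hd : 0 < 1 / ((p:ℝ) - 1) := by positivity
  have he : 0 < 2 / ((p:ℝ) - 1) := by positivity
  linarith [h1, h2, hd, he]
end

section
/- There exists a constant C > 0 such that for every integer p_1 ≥ 1, ∑_{k=0}^{p_1-1} C(p_1-1, k) · (k-2)! · (p_1-2-k)! ≤ C · (p_1-2)!, where C(n,k) denotes the binomial coefficient and m! = 1 for negative integers m. -/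
/-- Extended factorial: `m! = 1` for negative integers `m`. -/
def efact (m : ℤ) : ℕ := if m < 0 then 1 else Nat.factorial m.toNat

lemma efact_ofNat (m : ℕ) : efact (m : ℤ) = m.factorial := by
  simp [efact]

lemma efact_neg {m : ℤ} (h : m < 0) : efact m = 1 := if_pos h

lemma tele (m : ℕ) : ∑ k ∈ Finset.range m, (1:ℝ)/((k+2)*(k+1)) ≤ 1 := by
  have h : ∀ m : ℕ, ∑ k ∈ Finset.range m, (1:ℝ)/((k+2)*(k+1)) = 1 - 1/(m+1) := by
    intro m
    induction m with
    | zero => simp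
    | succ m ih =>
      rw [Finset.sum_range_succ, ih]
      have h1 : ((m:ℝ)+1) ≠ 0 := by positivity
      have h2 : ((m:ℝ)+2) ≠ 0 := by positivity
      push_cast
      field_simp
      ring
  rw [h]
  have : (0:ℝ) < (m:ℝ)+1 := by positivity
  have : (0:ℝ) ≤ 1/((m:ℝ)+1) := by positivity
  linarith

lemma u_sum (n : ℕ) (hn : 2 ≤ n) :
    ∑ k ∈ Finset.range (n+1),
      (if k = 0 then (1:ℝ) else if k = 1 then 2 else 1/((k:ℝ)*((k:ℝ)-1)) + 2/((n:ℝ)-1)) ≤ 6 := by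
  rw [Finset.range_eq_Ico, ← Finset.sum_Ico_consecutive _ (by omega : 0 ≤ 2) (by omega : 2 ≤ n+1)]
  have h1 : ∑ k ∈ Finset.Ico (0:ℕ) 2,
      (if k = 0 then (1:ℝ) else if k = 1 then 2 else 1/((k:ℝ)*((k:ℝ)-1)) + 2/((n:ℝ)-1)) = 3 := by
    rw [Finset.sum_Ico_eq_sum_range]
    norm_num [Finset.sum_range_succ]
  rw [h1]
  have h2 : ∑ k ∈ Finset.Ico 2 (n+1),
      (if k = 0 then (1:ℝ) else if k = 1 then 2 else 1/((k:ℝ)*((k:ℝ)-1)) + 2/((n:ℝ)-1))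
      = ∑ k ∈ Finset.Ico 2 (n+1), (1/((k:ℝ)*((k:ℝ)-1)) + 2/((n:ℝ)-1)) := by
    apply Finset.sum_congr rfl
    intro k hk
    simp only [Finset.mem_Ico] at hk
    rw [if_neg (by omega), if_neg (by omega)]
  rw [h2, Finset.sum_add_distrib]
  have h3 : ∑ k ∈ Finset.Ico 2 (n+1), (1/((k:ℝ)*((k:ℝ)-1))) ≤ 1 := by
    rw [Finset.sum_Ico_eq_sum_range]
    have := tele (n+1-2)
    refine le_trans (le_of_eq ?_) this
    apply Finset.sum_congr rfl
    intro j _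
    push_cast
    ring_nf
  have h4 : ∑ _k ∈ Finset.Ico 2 (n+1), (2/((n:ℝ)-1)) = 2 := by
    rw [Finset.sum_const, Nat.card_Ico]
    have hc : ((n+1-2 : ℕ) : ℝ) = (n:ℝ) - 1 := by
      have : n+1-2 = n-1 := by omega
      rw [this, Nat.cast_sub (by omega)]
      norm_num
    rw [nsmul_eq_mul, hc]
    have : (n:ℝ) - 1 ≠ 0 := by
      have : (2:ℝ) ≤ (n:ℝ) := by exact_mod_cast hn
      intro h; linarith
    field_simp
  rw [h4]
  linarith

set_option maxHeartbeats 1000000 in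
lemma term_bound (n k : ℕ) (hn : 2 ≤ n) (hk : k ≤ n) :
    (n.choose k : ℝ) * (efact ((k:ℤ)-2) : ℝ) * (efact ((n:ℤ)-1-(k:ℤ)) : ℝ) ≤
      ((n-1).factorial : ℝ) *
        (if k = 0 then 1 else if k = 1 then 2 else 1/((k:ℝ)*((k:ℝ)-1)) + 2/((n:ℝ)-1)) := by
  rcases Nat.lt_or_ge k 2 with hk2 | hk2
  · interval_cases k
    · -- k = 0
      rw [if_pos rfl]
      have h1 : (efact (((0:ℕ):ℤ)-2) : ℝ) = 1 := by norm_num [efact]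
      have h2 : ((n:ℤ)-1-((0:ℕ):ℤ)) = ((n-1 : ℕ):ℤ) := by omega
      rw [h1, h2, efact_ofNat]
      simp
    · -- k = 1
      rw [if_neg one_ne_zero, if_pos rfl]
      have h1 : (efact (((1:ℕ):ℤ)-2) : ℝ) = 1 := by norm_num [efact]
      have h2 : ((n:ℤ)-1-((1:ℕ):ℤ)) = ((n-2 : ℕ):ℤ) := by omega
      rw [h1, h2, efact_ofNat, Nat.choose_one_right]
      have hfac : (n-1).factorial = (n-1) * (n-2).factorial := by
        have h3 : n - 1 = (n-2) + 1 := by omega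
        rw [h3, Nat.factorial_succ]
      have : (n : ℕ) * (n-2).factorial ≤ 2 * ((n-1).factorial) := by
        rw [hfac, ← Nat.mul_assoc]
        exact Nat.mul_le_mul_right _ (by omega)
      calc (n:ℝ) * 1 * ((n-2).factorial : ℝ) = ((n * (n-2).factorial : ℕ) : ℝ) := by push_cast; ring
        _ ≤ ((2 * (n-1).factorial : ℕ) : ℝ) := by exact_mod_cast this
        _ = ((n-1).factorial : ℝ) * 2 := by push_cast; ring
  · rw [if_neg (by omega), if_neg (by omega)]
    rcases Nat.lt_or_ge k n with hkn | hkn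
    · -- 2 ≤ k < n : main case
      obtain ⟨j, rfl⟩ : ∃ j, k = j + 2 := ⟨k - 2, by omega⟩
      obtain ⟨m, rfl⟩ : ∃ m, n = (j+2) + m + 1 := ⟨n - (j+2) - 1, by omega⟩
      have h1 : (((j+2:ℕ)):ℤ) - 2 = ((j:ℕ):ℤ) := by push_cast; ring
      have h2 : (((j+2+m+1:ℕ)):ℤ) - 1 - ((j+2:ℕ):ℤ) = ((m:ℕ):ℤ) := by push_cast; ring
      rw [h1, h2, efact_ofNat, efact_ofNat]
      -- nat identity
      have hid := Nat.choose_mul_factorial_mul_factorial (show j+2 ≤ j+2+m+1 by omega)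
      have hsub : j+2+m+1 - (j+2) = m+1 := by omega
      rw [hsub] at hid
      have hfm : (j+2+m+1) - 1 = j + m + 2 := by omega
      rw [hfm]
      -- cast to ℝ
      set A : ℝ := ((j+2+m+1).choose (j+2) : ℝ) * (j.factorial : ℝ) * (m.factorial : ℝ) with hA_def
      set F : ℝ := ((j+m+2).factorial : ℝ) with hF_def
      have hfac1 : ((j+2).factorial : ℝ) = ((j:ℝ)+2)*((j:ℝ)+1)*(j.factorial : ℝ) := by
        rw [show j+2 = (j+1)+1 from rfl, Nat.factorial_succ, Nat.factorial_succ]; push_cast; ring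
      have hfac2 : ((m+1).factorial : ℝ) = ((m:ℝ)+1)*(m.factorial : ℝ) := by
        rw [Nat.factorial_succ]; push_cast; ring
      have hfac3 : ((j+2+m+1).factorial : ℝ) = ((j:ℝ)+(m:ℝ)+3)*F := by
        rw [show j+2+m+1 = (j+m+2)+1 by ring, Nat.factorial_succ, hF_def]; push_cast; ring
      have hA : A * (((j:ℝ)+2)*((j:ℝ)+1)*((m:ℝ)+1)) = ((j:ℝ)+(m:ℝ)+3)*F := by
        have hc : (((j+2+m+1).choose (j+2) : ℕ) : ℝ) * ((j+2).factorial : ℝ) * ((m+1).factorial : ℝ)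
            = ((j+2+m+1).factorial : ℝ) := by exact_mod_cast congrArg (fun t : ℕ => (t : ℝ)) hid
        rw [hfac1, hfac2, hfac3] at hc
        rw [hA_def]
        linear_combination hc
      have hF0 : (0:ℝ) ≤ F := by positivity
      have hX : (0:ℝ) < ((j+2:ℕ):ℝ)*(((j+2:ℕ):ℝ)-1) := by push_cast; nlinarith [Nat.cast_nonneg (α := ℝ) j]
      have hY : (0:ℝ) < ((j+2+m+1:ℕ):ℝ)-1 := by push_cast; nlinarith [Nat.cast_nonneg (α := ℝ) j, Nat.cast_nonneg (α := ℝ) m]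
      rw [div_add_div _ _ (ne_of_gt hX) (ne_of_gt hY), ← mul_div_assoc, le_div_iff₀ (by positivity)]
      push_cast
      have hj0 : (0:ℝ) ≤ (j:ℝ) := Nat.cast_nonneg j
      have hm0 : (0:ℝ) ≤ (m:ℝ) := Nat.cast_nonneg m
      have poly : ((j:ℝ)+m+3)*((j:ℝ)+m+2) ≤
          ((j:ℝ)+m+2)*((m:ℝ)+1) + 2*((j:ℝ)+2)*((j:ℝ)+1)*((m:ℝ)+1) := by
        nlinarith [mul_nonneg (mul_nonneg hj0 hj0) hm0, mul_nonneg hj0 hm0, hj0, hm0]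
      have key : (((j:ℝ)+m+3)*F)*((j:ℝ)+m+2) ≤
          F*(1*((j:ℝ)+2+(m:ℝ)+1-1)+((j:ℝ)+2)*((j:ℝ)+2-1)*2)*((m:ℝ)+1) := by
        have h := mul_le_mul_of_nonneg_left poly hF0
        nlinarith [h]
      have hm1 : (0:ℝ) < (m:ℝ)+1 := by positivity
      rw [← mul_le_mul_iff_of_pos_right hm1]
      calc A * (((j:ℝ)+2)*(((j:ℝ)+2)-1)*(((j:ℝ)+2+(m:ℝ)+1)-1)) * ((m:ℝ)+1)
          = (A * (((j:ℝ)+2)*((j:ℝ)+1)*((m:ℝ)+1))) * ((j:ℝ)+(m:ℝ)+2) := by ring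
        _ = (((j:ℝ)+(m:ℝ)+3)*F) * ((j:ℝ)+(m:ℝ)+2) := by rw [hA]
        _ ≤ F*(1*((j:ℝ)+2+(m:ℝ)+1-1)+((j:ℝ)+2)*((j:ℝ)+2-1)*2)*((m:ℝ)+1) := key
        _ = F * (1 * ((j:ℝ)+2+(m:ℝ)+1-1) + ((j:ℝ)+2) * (((j:ℝ)+2)-1) * 2) * ((m:ℝ)+1) := by ring
    · -- k = n
      have hkn' : k = n := le_antisymm hk hkn
      subst hkn'
      rw [Nat.choose_self]
      have h1 : ((k:ℤ)-2) = ((k-2:ℕ):ℤ) := by omega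
      have h2 : efact ((k:ℤ)-1-(k:ℤ)) = 1 := efact_neg (by omega)
      rw [h1, efact_ofNat, h2]
      have hfac : ((k-1).factorial : ℝ) = (((k:ℝ))-1) * ((k-2).factorial : ℝ) := by
        have h3 : k - 1 = (k-2) + 1 := by omega
        rw [h3, Nat.factorial_succ]
        have : ((k-2+1:ℕ):ℝ) = (k:ℝ)-1 := by
          rw [Nat.cast_add, Nat.cast_sub (show 2 ≤ k by omega)]; push_cast; ring
        rw [Nat.cast_mul, this]
      have hY : (0:ℝ) < (k:ℝ)-1 := by
        have : (2:ℝ) ≤ (k:ℝ) := by exact_mod_cast hk2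
        linarith
      have hX0 : (0:ℝ) ≤ 1/((k:ℝ)*((k:ℝ)-1)) := by positivity
      have h2k : ((k-1).factorial : ℝ) * (2/((k:ℝ)-1)) = 2 * ((k-2).factorial : ℝ) := by
        rw [hfac]; field_simp
      have hfp : (0:ℝ) ≤ ((k-1).factorial : ℝ) := by positivity
      have hfp2 : (0:ℝ) ≤ ((k-2).factorial : ℝ) := by positivity
      nlinarith [mul_nonneg hfp hX0]



/-- There is a constant `C > 0` such that for every `p₁ ≥ 1`,
`∑_{k=0}^{p₁-1} C(p₁-1,k) (k-2)! (p₁-2-k)! ≤ C (p₁-2)!`,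
with the convention `m! = 1` for negative `m`. -/
theorem binom_efact_sum_le : ∃ C : ℝ, 0 < C ∧ ∀ p₁ : ℕ, 1 ≤ p₁ →
    ∑ k ∈ Finset.range p₁,
        (Nat.choose (p₁ - 1) k : ℝ) * (efact ((k : ℤ) - 2) : ℝ) *
          (efact ((p₁ : ℤ) - 2 - (k : ℤ)) : ℝ)
      ≤ C * (efact ((p₁ : ℤ) - 2) : ℝ) := by
  refine ⟨6, by norm_num, ?_⟩
  intro p₁ hp
  obtain ⟨n, rfl⟩ : ∃ n, p₁ = n + 1 := ⟨p₁ - 1, by omega⟩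
  have hsimp : n + 1 - 1 = n := by omega
  rcases Nat.lt_or_ge n 2 with hn | hn
  · interval_cases n
    · norm_num [Finset.sum_range_succ, efact]
    · norm_num [Finset.sum_range_succ, efact]
  · -- n ≥ 2
    have harg : ((n+1 : ℕ):ℤ) - 2 = ((n-1 : ℕ):ℤ) := by omega
    rw [hsimp]
    conv_rhs => rw [harg, efact_ofNat]
    calc ∑ k ∈ Finset.range (n+1),
          (Nat.choose n k : ℝ) * (efact ((k : ℤ) - 2) : ℝ) * (efact (((n+1 : ℕ) : ℤ) - 2 - (k : ℤ)) : ℝ)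
        ≤ ∑ k ∈ Finset.range (n+1), ((n-1).factorial : ℝ) *
            (if k = 0 then 1 else if k = 1 then 2 else 1/((k:ℝ)*((k:ℝ)-1)) + 2/((n:ℝ)-1)) := by
          apply Finset.sum_le_sum
          intro k hk
          simp only [Finset.mem_range] at hk
          have harg2 : ((n+1 : ℕ):ℤ) - 2 - (k:ℤ) = ((n:ℕ):ℤ) - 1 - (k:ℤ) := by push_cast; ring
          rw [harg2]
          exact term_bound n k hn (by omega)
      _ = ((n-1).factorial : ℝ) * ∑ k ∈ Finset.range (n+1),
            (if k = 0 then 1 else if k = 1 then 2 else 1/((k:ℝ)*((k:ℝ)-1)) + 2/((n:ℝ)-1)) := by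
          rw [Finset.mul_sum]
      _ ≤ ((n-1).factorial : ℝ) * 6 := by
          have h6 := u_sum n hn
          have h0 : (0:ℝ) ≤ ((n-1).factorial : ℝ) := by positivity
          exact mul_le_mul_of_nonneg_left h6 h0
      _ = 6 * ((n-1).factorial : ℝ) := by ring
end

section
/- Let g : [0,1] → ℝ be a positive monotone decreasing function, and suppose for some integer n ≥ 4 and constant C > 0 that g(θ) ≤ (1/10) g(θ(1 - 1/n)) + C θ^{-(n-3)} for all θ ∈ (0,1]. Then there exists a constant A (independent of C and g, possibly depending on n only through a universal bound) such that g(θ) < C A θ^{-(n-3)} for all θ ∈ (0,1]. -/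
/-- Friedman-type iteration lemma: if `g : [0,1] → ℝ` is positive and monotone
decreasing and satisfies `g(θ) ≤ (1/10) g(θ(1-1/n)) + C θ^{-(n-3)}` for an integer
`n ≥ 4` and constant `C > 0`, then `g(θ) < C A θ^{-(n-3)}` for a constant `A`
independent of `g` and `C`. -/
theorem friedman_iteration (n : ℕ) (hn : 4 ≤ n) :
    ∃ A : ℝ, ∀ (g : ℝ → ℝ) (C : ℝ), 0 < C →
      (∀ θ ∈ Set.Icc (0 : ℝ) 1, 0 < g θ) →
      (∀ θ₁ ∈ Set.Icc (0 : ℝ) 1, ∀ θ₂ ∈ Set.Icc (0 : ℝ) 1, θ₁ ≤ θ₂ → g θ₂ ≤ g θ₁) →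
      (∀ θ ∈ Set.Ioc (0 : ℝ) 1,
        g θ ≤ (1 / 10) * g (θ * (1 - 1 / (n : ℝ))) + C * θ ^ (-((n : ℤ) - 3))) →
      ∀ θ ∈ Set.Ioc (0 : ℝ) 1, g θ < C * A * θ ^ (-((n : ℤ) - 3)) := by
  refine ⟨3, ?_⟩
  intro g C hC hpos hmono hrec
  set m : ℕ := n - 3 with hm
  have hmn : (m : ℝ) = (n : ℝ) - 3 := by
    have : ((m : ℕ) : ℤ) = (n : ℤ) - 3 := by omega
    exact_mod_cast this
  have hz : -((n : ℤ) - 3) = -(m : ℤ) := by omega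
  have hn4 : (4 : ℝ) ≤ (n : ℝ) := by exact_mod_cast hn
  have hnpos : (0 : ℝ) < (n : ℝ) := by linarith
  set r : ℝ := 1 - 1 / (n : ℝ) with hrdef
  have hr0 : 0 < r := by
    have : 1 / (n : ℝ) ≤ 1 / 4 := by
      apply one_div_le_one_div_of_le <;> linarith
    simp only [hrdef]; linarith
  have hr1 : r ≤ 1 := by
    have : 0 < 1 / (n : ℝ) := by positivity
    simp only [hrdef]; linarith
  -- key estimate : (r⁻¹)^m ≤ 3
  have hn1 : (1 : ℝ) ≤ (n : ℝ) - 1 := by linarith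
  have hrinv : r⁻¹ = 1 + 1 / ((n : ℝ) - 1) := by
    rw [hrdef]
    field_simp
    ring
  have hkey : (r ^ m)⁻¹ ≤ 3 := by
    rw [← inv_pow]
    have h1 : r⁻¹ ≤ Real.exp (1 / ((n : ℝ) - 1)) := by
      rw [hrinv]
      have := Real.add_one_le_exp (1 / ((n : ℝ) - 1))
      linarith
    have h2 : (r⁻¹) ^ m ≤ Real.exp (1 / ((n : ℝ) - 1)) ^ m := by
      apply pow_le_pow_left₀ (by positivity) h1
    have h3 : Real.exp (1 / ((n : ℝ) - 1)) ^ m = Real.exp ((m : ℝ) / ((n : ℝ) - 1)) := by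
      rw [← Real.exp_nat_mul]
      ring_nf
    have h4 : (m : ℝ) / ((n : ℝ) - 1) ≤ 1 := by
      rw [div_le_one (by linarith)]
      rw [hmn]; linarith
    have h5 : Real.exp ((m : ℝ) / ((n : ℝ) - 1)) ≤ Real.exp 1 := Real.exp_le_exp.2 h4
    have h6 : Real.exp 1 ≤ 3 := by
      have := Real.exp_one_lt_d9
      linarith
    calc (r⁻¹) ^ m ≤ Real.exp (1 / ((n : ℝ) - 1)) ^ m := h2
      _ = Real.exp ((m : ℝ) / ((n : ℝ) - 1)) := h3
      _ ≤ 3 := le_trans h5 h6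
  -- rewrite zpow as inverse of pow
  have hzpow : ∀ θ : ℝ, 0 < θ → θ ^ (-((n : ℤ) - 3)) = (θ ^ m)⁻¹ := by
    intro θ hθ
    rw [hz, zpow_neg, zpow_natCast]
  have hrec' : ∀ θ ∈ Set.Ioc (0 : ℝ) 1,
      g θ ≤ (1 / 10) * g (θ * r) + C * (θ ^ m)⁻¹ := by
    intro θ hθ
    have := hrec θ hθ
    rwa [hzpow θ hθ.1] at this
  -- main induction
  have main : ∀ k : ℕ, ∀ θ ∈ Set.Ioc (0 : ℝ) 1,
      g θ ≤ (1 / 10) ^ k * g (θ * r ^ k) + 2 * C * (θ ^ m)⁻¹ := by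
    intro k
    induction k with
    | zero =>
      intro θ hθ
      have : 0 ≤ 2 * C * (θ ^ m)⁻¹ := by
        have := hθ.1; positivity
      simp only [pow_zero, mul_one, one_mul]
      linarith
    | succ k ih =>
      intro θ hθ
      obtain ⟨hθ0, hθ1⟩ := hθ
      have hθr : θ * r ∈ Set.Ioc (0 : ℝ) 1 := by
        constructor
        · positivity
        · nlinarith
      have h1 := hrec' θ ⟨hθ0, hθ1⟩
      have h2 := ih (θ * r) hθr
      have hθm : 0 < (θ ^ m)⁻¹ := by positivity
      have hrm : 0 < r ^ m := by positivity
      have hsplit : ((θ * r) ^ m)⁻¹ = (θ ^ m)⁻¹ * (r ^ m)⁻¹ := by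
        rw [mul_pow, mul_inv]
      have h3 : (θ * r) * r ^ k = θ * r ^ (k + 1) := by ring
      rw [hsplit, h3] at h2
      have hgb : 0 < g (θ * r ^ (k+1)) := by
        apply hpos
        constructor
        · have hrk : 0 < r ^ (k+1) := by positivity
          positivity
        · have hrk1 : r ^ (k+1) ≤ 1 := pow_le_one₀ (le_of_lt hr0) hr1
          have hrk0 : 0 < r ^ (k+1) := by positivity
          nlinarith
      calc g θ ≤ (1 / 10) * g (θ * r) + C * (θ ^ m)⁻¹ := h1
        _ ≤ (1 / 10) * ((1 / 10) ^ k * g (θ * r ^ (k+1)) + 2 * C * ((θ ^ m)⁻¹ * (r ^ m)⁻¹))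
              + C * (θ ^ m)⁻¹ := by nlinarith
        _ = (1 / 10) ^ (k+1) * g (θ * r ^ (k+1))
              + (1 / 5) * C * (θ ^ m)⁻¹ * (r ^ m)⁻¹ + C * (θ ^ m)⁻¹ := by ring
        _ ≤ (1 / 10) ^ (k+1) * g (θ * r ^ (k+1))
              + (1 / 5) * C * (θ ^ m)⁻¹ * 3 + C * (θ ^ m)⁻¹ := by
            nlinarith [mul_le_mul_of_nonneg_left hkey
              (show (0:ℝ) ≤ (1/5) * C * (θ ^ m)⁻¹ by positivity)]
        _ ≤ (1 / 10) ^ (k+1) * g (θ * r ^ (k+1)) + 2 * C * (θ ^ m)⁻¹ := by nlinarith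
  -- choose k with (1/10)^k * g 0 < C
  have hg0 : 0 < g 0 := hpos 0 (by constructor <;> norm_num)
  obtain ⟨k, hk⟩ := exists_pow_lt_of_lt_one (show (0:ℝ) < C / g 0 by positivity)
    (show (1:ℝ)/10 < 1 by norm_num)
  have hkC : (1 / 10 : ℝ) ^ k * g 0 < C := (lt_div_iff₀ hg0).1 hk
  intro θ hθ
  obtain ⟨hθ0, hθ1⟩ := hθ
  have hθm1 : (1 : ℝ) ≤ (θ ^ m)⁻¹ := by
    rw [le_inv_comm₀ (by norm_num) (by positivity)]
    simpa using pow_le_one₀ (le_of_lt hθ0) hθ1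
  have hmem : θ * r ^ k ∈ Set.Icc (0 : ℝ) 1 := by
    constructor
    · positivity
    · have hrk1 : r ^ k ≤ 1 := pow_le_one₀ (le_of_lt hr0) hr1
      exact mul_le_one₀ hθ1 (by positivity) hrk1
  have hgle : g (θ * r ^ k) ≤ g 0 := by
    apply hmono 0 (by constructor <;> norm_num) _ hmem
    positivity
  have h := main k θ ⟨hθ0, hθ1⟩
  rw [hzpow θ hθ0]
  have hp : (0:ℝ) < (1/10:ℝ)^k := by positivity
  have e1 : (1 / 10 : ℝ) ^ k * g (θ * r ^ k) ≤ (1 / 10 : ℝ) ^ k * g 0 :=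
    mul_le_mul_of_nonneg_left hgle hp.le
  have e2 : C * 1 ≤ C * (θ ^ m)⁻¹ := mul_le_mul_of_nonneg_left hθm1 hC.le
  have : g θ < C * (θ ^ m)⁻¹ + 2 * C * (θ ^ m)⁻¹ := by
    rw [mul_one] at e2
    linarith
  linarith [this]
end

section
/- Let A, B, C, D > 0 with B sufficiently large compared to A (say B ≥ 2A and B ≥ 2), and suppose sequences (a_l), (b_l) of nonnegative reals satisfy a_l ≤ C A^l (l−2)! and b_l ≤ D B^{l−2}(l−2)! for all l ≥ 0 (with m! = 1 for negative m). Then the Leibniz convolution c_p = ∑_{l=0}^{p} C(p,l) a_l b_{p−l} satisfies c_p ≤ M D B^{p−2}(p−1)! for all p ≥ 1, for a constant M depending only on A, C (not on p, B, D). -/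

lemma efact_coe_sub (n k : ℕ) : efact ((n:ℤ) - k) = (n - k).factorial := by
  unfold efact
  split_ifs with h
  · have : n - k = 0 := by omega
    simp [this]
  · congr 1
    omega

lemma efact_sub_two (n : ℕ) : efact ((n:ℤ) - 2) = (n - 2).factorial := by
  simpa using efact_coe_sub n 2

lemma efact_sub_one (n : ℕ) : efact ((n:ℤ) - 1) = (n - 1).factorial := by
  simpa using efact_coe_sub n 1

lemma aux1 (p : ℕ) : p * (p-3).factorial ≤ 2 * (p-1).factorial := by
  match p with
  | 0 => simp [Nat.factorial]
  | 1 => simp [Nat.factorial]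
  | 2 => simp [Nat.factorial]
  | (q+3) =>
    have e1 : q + 3 - 3 = q := by omega
    have e2 : q + 3 - 1 = q + 2 := by omega
    rw [e1, e2]
    have h : (q+2).factorial = (q+2)*(q+1)*q.factorial := by
      rw [Nat.factorial_succ, Nat.factorial_succ]; ring
    have hcoef : q + 3 ≤ 2*(q+2)*(q+1) := by nlinarith
    calc (q+3)*q.factorial ≤ (2*(q+2)*(q+1))*q.factorial := Nat.mul_le_mul_right _ hcoef
      _ = 2*(q+2).factorial := by rw [h]; ring

lemma key (p l : ℕ) (hp : 1 ≤ p) (hl : l ≤ p) :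
    p.choose l * (l-2).factorial * (p-l-2).factorial ≤ 2 * (p-1).factorial := by
  rcases Nat.lt_or_ge l 2 with h2 | h2
  · interval_cases l
    · have h := Nat.factorial_le (show p-2 ≤ p-1 by omega)
      simpa using by omega
    · have e : p - 1 - 2 = p - 3 := by omega
      simpa [Nat.choose_one_right, e] using aux1 p
  · rcases Nat.lt_or_ge (p - l) 2 with h3 | h3
    · -- l = p or l = p - 1
      rcases Nat.lt_or_ge (p - l) 1 with h4 | h4
      · -- l = p
        have hlp : l = p := by omega
        subst hlp
        have h := Nat.factorial_le (show l-2 ≤ l-1 by omega)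
        simp only [Nat.choose_self, Nat.sub_self, one_mul]
        have : (0 - 2).factorial = 1 := by norm_num
        rw [this]
        omega
      · -- p - l = 1
        have hlp : l = p - 1 := by omega
        have hc : p.choose l = p := by
          have : p.choose (p - 1) = p.choose 1 := Nat.choose_symm (by omega)
          rw [hlp, this, Nat.choose_one_right]
        have e1 : p - l - 2 = 0 := by omega
        have e2 : l - 2 = p - 3 := by omega
        rw [hc, e1, e2]
        simpa using aux1 p
    · -- main case: 2 ≤ l, 2 ≤ p - l
      obtain ⟨m, rfl⟩ : ∃ m, l = m + 2 := ⟨l - 2, by omega⟩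
      obtain ⟨k, rfl⟩ : ∃ k, p = m + k + 4 := ⟨p - m - 4, by omega⟩
      have e1 : m + 2 - 2 = m := by omega
      have e2 : m + k + 4 - (m + 2) - 2 = k := by omega
      have e3 : m + k + 4 - 1 = m + k + 3 := by omega
      rw [e1, e2, e3]
      have hid := Nat.choose_mul_factorial_mul_factorial (show m+2 ≤ m+k+4 by omega)
      have e4 : m + k + 4 - (m + 2) = k + 2 := by omega
      rw [e4] at hid
      have f1 : (m+2).factorial = (m+2)*(m+1)*m.factorial := by
        rw [Nat.factorial_succ, Nat.factorial_succ]; ring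
      have f2 : (k+2).factorial = (k+2)*(k+1)*k.factorial := by
        rw [Nat.factorial_succ, Nat.factorial_succ]; ring
      have f3 : (m+k+4).factorial = (m+k+4)*(m+k+3).factorial := by
        rw [show m+k+4 = (m+k+3)+1 by ring, Nat.factorial_succ]
      rw [f1, f2, f3] at hid
      set X := (m+k+4).choose (m+2) with hX
      set K := (m+2)*(m+1)*((k+2)*(k+1)) with hK
      have heq : (X * m.factorial * k.factorial) * K = (m+k+4) * (m+k+3).factorial := by
        rw [hK]; ring_nf; ring_nf at hid; linarith
      have hKb : m + k + 4 ≤ 2 * K := by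
        have h1 : m+k+4 ≤ (m+2)*(k+2) := by nlinarith
        have h2 : (m+2)*(k+2) ≤ K := by
          rw [hK]
          calc (m+2)*(k+2) = ((m+2)*(k+2))*1 := by ring
            _ ≤ ((m+2)*(k+2))*((m+1)*(k+1)) :=
                Nat.mul_le_mul_left _ (Nat.one_le_iff_ne_zero.mpr (Nat.mul_ne_zero (by omega) (by omega)))
            _ = (m+2)*(m+1)*((k+2)*(k+1)) := by ring
        omega
      have h5 : (X * m.factorial * k.factorial) * (m+k+4) ≤ (2 * (m+k+3).factorial) * (m+k+4) := by
        calc (X * m.factorial * k.factorial) * (m+k+4)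
            ≤ (X * m.factorial * k.factorial) * (2*K) := Nat.mul_le_mul_left _ hKb
          _ = 2 * ((X * m.factorial * k.factorial) * K) := by ring
          _ = 2 * ((m+k+4) * (m+k+3).factorial) := by rw [heq]
          _ = (2 * (m+k+3).factorial) * (m+k+4) := by ring
      exact Nat.le_of_mul_le_mul_right h5 (by omega)

/-- Leibniz convolution estimate: if `a_l ≤ C A^l (l-2)!` and
`b_l ≤ D B^{l-2} (l-2)!` with `B ≥ 2A`, `B ≥ 2`, then
`∑_{l=0}^p C(p,l) a_l b_{p-l} ≤ M D B^{p-2} (p-1)!` for a constant `M`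
depending only on `A` and `C`. -/
theorem leibniz_convolution_estimate (A C : ℝ) (hA : 0 < A) (hC : 0 < C) :
    ∃ M : ℝ, ∀ (B D : ℝ) (a b : ℕ → ℝ), 0 < B → 0 < D → 2 * A ≤ B → 2 ≤ B →
      (∀ l, 0 ≤ a l) → (∀ l, 0 ≤ b l) →
      (∀ l : ℕ, a l ≤ C * A ^ l * (efact ((l : ℤ) - 2) : ℝ)) →
      (∀ l : ℕ, b l ≤ D * B ^ ((l : ℤ) - 2) * (efact ((l : ℤ) - 2) : ℝ)) →
      ∀ p : ℕ, 1 ≤ p →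
        ∑ l ∈ Finset.range (p + 1), (Nat.choose p l : ℝ) * a l * b (p - l)
          ≤ M * D * B ^ ((p : ℤ) - 2) * (efact ((p : ℤ) - 1) : ℝ) := by
  refine ⟨4 * C, ?_⟩
  intro B D a b hB hD hBA hB2 ha0 hb0 ha hb p hp
  have hB0 : B ≠ 0 := ne_of_gt hB
  set Q : ℝ := 2 * C * D * B ^ ((p:ℤ) - 2) * ((p-1).factorial : ℝ) with hQ
  have hQ0 : 0 ≤ Q := by rw [hQ]; positivity
  have hterm : ∀ l ∈ Finset.range (p+1),
      (Nat.choose p l : ℝ) * a l * b (p - l) ≤ (1/2:ℝ)^l * Q := by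
    intro l hl
    have hlp : l ≤ p := by
      simp only [Finset.mem_range] at hl; omega
    have hal := ha l
    have hbl := hb (p - l)
    rw [efact_sub_two] at hal hbl
    have step1 : (Nat.choose p l : ℝ) * a l * b (p - l)
        ≤ (Nat.choose p l : ℝ) * (C * A ^ l * ((l-2).factorial : ℝ))
          * (D * B ^ (((p-l:ℕ):ℤ) - 2) * (((p-l)-2).factorial : ℝ)) := by
      have h1 : (Nat.choose p l : ℝ) * a l ≤
          (Nat.choose p l : ℝ) * (C * A ^ l * ((l-2).factorial : ℝ)) :=
        mul_le_mul_of_nonneg_left hal (by positivity)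
      exact mul_le_mul h1 hbl (hb0 _) (by positivity)
    have hpowB : (0:ℝ) < B ^ (((p-l:ℕ):ℤ) - 2) := zpow_pos hB _
    have hcomb : (Nat.choose p l : ℝ) * ((l-2).factorial : ℝ) * (((p-l)-2).factorial : ℝ)
        ≤ 2 * ((p-1).factorial : ℝ) := by
      exact_mod_cast key p l hp hlp
    have hpow : A ^ l * B ^ (((p-l:ℕ):ℤ) - 2) ≤ (1/2:ℝ)^l * B ^ ((p:ℤ) - 2) := by
      have hc : (((p-l:ℕ):ℤ) - 2) = ((p:ℤ) - 2) + (-(l:ℤ)) := by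
        have : ((p-l:ℕ):ℤ) = (p:ℤ) - (l:ℤ) := by
          push_cast [Nat.cast_sub hlp]; ring
        rw [this]; ring
      rw [hc, zpow_add₀ hB0, zpow_neg, zpow_natCast]
      have hab : A ^ l * (B^l)⁻¹ ≤ (1/2:ℝ)^l := by
        rw [← div_eq_mul_inv, ← div_pow]
        apply pow_le_pow_left₀ (by positivity)
        rw [div_le_div_iff₀ hB (by norm_num : (0:ℝ) < 2)]
        linarith
      calc A ^ l * (B ^ ((p:ℤ)-2) * (B^l)⁻¹)
          = (A ^ l * (B^l)⁻¹) * B ^ ((p:ℤ)-2) := by ring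
        _ ≤ (1/2:ℝ)^l * B ^ ((p:ℤ)-2) := by
            apply mul_le_mul_of_nonneg_right hab (le_of_lt (zpow_pos hB _))
    have step2 : (Nat.choose p l : ℝ) * (C * A ^ l * ((l-2).factorial : ℝ))
          * (D * B ^ (((p-l:ℕ):ℤ) - 2) * (((p-l)-2).factorial : ℝ)) ≤ (1/2:ℝ)^l * Q := by
      have lhs_eq : (Nat.choose p l : ℝ) * (C * A ^ l * ((l-2).factorial : ℝ))
          * (D * B ^ (((p-l:ℕ):ℤ) - 2) * (((p-l)-2).factorial : ℝ))
          = (C * D) * ((A ^ l * B ^ (((p-l:ℕ):ℤ) - 2))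
            * ((Nat.choose p l : ℝ) * ((l-2).factorial : ℝ) * (((p-l)-2).factorial : ℝ))) := by
        ring
      rw [lhs_eq, hQ]
      have hmul : (A ^ l * B ^ (((p-l:ℕ):ℤ) - 2))
            * ((Nat.choose p l : ℝ) * ((l-2).factorial : ℝ) * (((p-l)-2).factorial : ℝ))
          ≤ ((1/2:ℝ)^l * B ^ ((p:ℤ) - 2)) * (2 * ((p-1).factorial : ℝ)) := by
        apply mul_le_mul hpow hcomb (by positivity) (by positivity)
      calc (C * D) * ((A ^ l * B ^ (((p-l:ℕ):ℤ) - 2))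
            * ((Nat.choose p l : ℝ) * ((l-2).factorial : ℝ) * (((p-l)-2).factorial : ℝ)))
          ≤ (C * D) * (((1/2:ℝ)^l * B ^ ((p:ℤ) - 2)) * (2 * ((p-1).factorial : ℝ))) :=
            mul_le_mul_of_nonneg_left hmul (by positivity)
        _ = (1/2:ℝ)^l * (2 * C * D * B ^ ((p:ℤ) - 2) * ((p-1).factorial : ℝ)) := by ring
    exact le_trans step1 step2
  have efp : (efact ((p:ℤ) - 1) : ℝ) = ((p-1).factorial : ℝ) := by
    rw [efact_sub_one]
  rw [efp]
  calc ∑ l ∈ Finset.range (p + 1), (Nat.choose p l : ℝ) * a l * b (p - l)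
      ≤ ∑ l ∈ Finset.range (p + 1), (1/2:ℝ)^l * Q := Finset.sum_le_sum hterm
    _ = (∑ l ∈ Finset.range (p + 1), (1/2:ℝ)^l) * Q := by rw [Finset.sum_mul]
    _ ≤ 2 * Q := mul_le_mul_of_nonneg_right (sum_geometric_two_le _) hQ0
    _ = 4 * C * D * B ^ ((p:ℤ) - 2) * ((p-1).factorial : ℝ) := by rw [hQ]; ring
end

section
/- For all integers p ≥ 2, ∑_{k=1}^{p-1} C(p-1,k) (k-3)! (p-1-k)! ≤ C (p-1)! for some absolute constant C, where m! = 1 for negative integers m and C(n,k) is the binomial coefficient. -/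
lemma efact_ofNat_s14 (n : ℕ) : efact (n : ℤ) = Nat.factorial n := by
  simp [efact]

lemma aux_sum_eq (n : ℕ) :
    ∑ k ∈ Finset.Icc 1 (n + 2), (efact ((k : ℤ) - 3) : ℝ) / (Nat.factorial k : ℝ)
      = 7/4 - 1/(2*(n+2)*(n+1)) := by
  induction n with
  | zero =>
      norm_num [Finset.sum_Icc_succ_top, efact, Nat.factorial]
  | succ m ih =>
      rw [show m + 1 + 2 = (m + 2) + 1 by ring,
        Finset.sum_Icc_succ_top (by omega), ih]
      have h1 : ((m + 2 + 1 : ℕ) : ℤ) - 3 = (m : ℤ) := by push_cast; ring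
      rw [h1, efact_ofNat_s14]
      have h2 : Nat.factorial (m + 2 + 1) = (m+3)*((m+2)*((m+1)*Nat.factorial m)) := by
        simp [Nat.factorial]
      rw [h2]
      have hm : (Nat.factorial m : ℝ) > 0 := by positivity
      have hm1 : (0:ℝ) < (m:ℝ) + 1 := by positivity
      push_cast
      field_simp
      ring

lemma sum_g_le (n : ℕ) (hn : 1 ≤ n) :
    ∑ k ∈ Finset.Icc 1 n, (efact ((k : ℤ) - 3) : ℝ) / (Nat.factorial k : ℝ) ≤ 2 := by
  match n, hn with
  | 1, _ => norm_num [efact, Nat.factorial]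
  | (m + 2), _ =>
      have h := aux_sum_eq m
      have hpos : (0:ℝ) < 1/(2*((m:ℝ)+2)*((m:ℝ)+1)) := by positivity
      rw [h]; linarith

/-- For all `p ≥ 2`, `∑_{k=1}^{p-1} C(p-1,k) (k-3)! (p-1-k)! ≤ C (p-1)!` for an
absolute constant `C`, with `m! = 1` for negative `m`. -/
theorem binom_efact_sum_le_abs : ∃ C : ℝ, 0 < C ∧ ∀ p : ℕ, 2 ≤ p →
    ∑ k ∈ Finset.Icc 1 (p - 1),
        (Nat.choose (p - 1) k : ℝ) * (efact ((k : ℤ) - 3) : ℝ) *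
          (efact ((p : ℤ) - 1 - (k : ℤ)) : ℝ)
      ≤ C * (Nat.factorial (p - 1) : ℝ) := by
  refine ⟨2, by norm_num, ?_⟩
  intro p hp
  have key : ∀ k ∈ Finset.Icc 1 (p - 1),
      (Nat.choose (p - 1) k : ℝ) * (efact ((k : ℤ) - 3) : ℝ) *
          (efact ((p : ℤ) - 1 - (k : ℤ)) : ℝ)
        = ((efact ((k : ℤ) - 3) : ℝ) / (Nat.factorial k : ℝ)) *
            (Nat.factorial (p - 1) : ℝ) := by
    intro k hk
    rw [Finset.mem_Icc] at hk
    have hk1 : 1 ≤ k := hk.1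
    have hk2 : k ≤ p - 1 := hk.2
    have hcast : (p : ℤ) - 1 - (k : ℤ) = ((p - 1 - k : ℕ) : ℤ) := by
      have : k ≤ p - 1 := hk2
      omega
    rw [hcast, efact_ofNat_s14]
    have hfac := Nat.choose_mul_factorial_mul_factorial hk2
    have hfacR : (Nat.choose (p-1) k : ℝ) * (Nat.factorial k : ℝ) *
        (Nat.factorial (p-1-k) : ℝ) = (Nat.factorial (p-1) : ℝ) := by
      exact_mod_cast congrArg (Nat.cast : ℕ → ℝ) hfac
    have hkf : (Nat.factorial k : ℝ) ≠ 0 := by positivity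
    field_simp
    nlinarith [hfacR]
  rw [Finset.sum_congr rfl key, ← Finset.sum_mul]
  have hS := sum_g_le (p - 1) (by omega)
  have hfpos : (0:ℝ) ≤ (Nat.factorial (p-1) : ℝ) := by positivity
  exact mul_le_mul_of_nonneg_right hS hfpos
end

section
/- For all integers p ≥ 2 and 1 ≤ p₁ ≤ p, ∑_{k=1}^{p₁-1} C(p₁-1,k)·(k-3)!·(p-1-k)! ≤ C·(p-1)!·(p₁-1)!/(p₁-1)! where one uses (p-1-k)!/(p₁-1-k)! ≤ (p-1)!/(p₁-1)! and ∑_{k=1}^{p₁-1} C(p₁-1,k)(k-3)!(p₁-1-k)! ≤ C(p₁-1)!; in particular the total is at most C(p-1)! for an absolute constant C. -/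
lemma efact_nonneg_cast (m : ℤ) : (0:ℝ) ≤ (efact m : ℝ) := by positivity

lemma efact_sum_le (n : ℕ) (hn : 1 ≤ n) :
    ∑ k ∈ Finset.Icc 1 n, (efact ((k:ℤ)-3) : ℝ) / (Nat.factorial k : ℝ)
      ≤ 2 - 1 / n := by
  induction n with
  | zero => omega
  | succ n ih =>
    rcases Nat.lt_or_ge n 1 with h1 | h1
    · have : n = 0 := by omega
      subst this
      norm_num [efact, Nat.factorial]
    · have hstep : (efact (((n+1:ℕ):ℤ)-3) : ℝ) / (Nat.factorial (n+1) : ℝ)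
          ≤ 1/(n:ℝ) - 1/((n:ℝ)+1) := by
        have hnpos : (0:ℝ) < n := by exact_mod_cast h1
        have hfac : (0:ℝ) < (Nat.factorial (n+1) : ℝ) := by positivity
        have hrw : 1/(n:ℝ) - 1/((n:ℝ)+1) = 1/((n:ℝ)*((n:ℝ)+1)) := by
          field_simp
          ring
        rw [hrw]
        rcases Nat.lt_or_ge n 2 with h2 | h2
        · have : n = 1 := by omega
          subst this
          norm_num [efact, Nat.factorial]
        · obtain ⟨m, rfl⟩ : ∃ m, n = m + 2 := ⟨n - 2, by omega⟩
          have harg : ((m+2+1:ℕ):ℤ)-3 = ((m:ℕ):ℤ) := by push_cast; ring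
          rw [harg, show efact ((m:ℕ):ℤ) = Nat.factorial m by simp [efact]]
          rw [div_le_div_iff₀ hfac (by positivity)]
          have hnat : Nat.factorial m * ((m+2)*(m+3)) ≤ Nat.factorial (m+2+1) := by
            have : Nat.factorial (m+3) = (m+3)*((m+2)*((m+1)*Nat.factorial m)) := by
              simp [Nat.factorial]
            rw [show m+2+1 = m+3 from rfl, this]
            have hm1 : 1 ≤ m + 1 := by omega
            nlinarith [Nat.factorial_pos m]
          have := (Nat.cast_le (α := ℝ)).2 hnat
          push_cast at this ⊢
          nlinarith
      rw [Finset.sum_Icc_succ_top (by omega : 1 ≤ n+1)]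
      have ihh := ih h1
      push_cast at hstep ihh ⊢
      linarith

/-- For all `p ≥ 2` and `1 ≤ p₁ ≤ p`,
`∑_{k=1}^{p₁-1} C(p₁-1,k) (k-3)! (p-1-k)! ≤ C (p-1)!` for an absolute constant
`C`, with `m! = 1` for negative `m`. -/
theorem binom_efact_two_level_sum_le : ∃ C : ℝ, 0 < C ∧
    ∀ p p₁ : ℕ, 2 ≤ p → 1 ≤ p₁ → p₁ ≤ p →
      ∑ k ∈ Finset.Icc 1 (p₁ - 1),
          (Nat.choose (p₁ - 1) k : ℝ) * (efact ((k : ℤ) - 3) : ℝ) *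
            (efact ((p : ℤ) - 1 - (k : ℤ)) : ℝ)
        ≤ C * (Nat.factorial (p - 1) : ℝ) := by
  refine ⟨2, by norm_num, ?_⟩
  intro p p₁ hp hp1 hp1p
  rcases Nat.lt_or_ge p₁ 2 with h2 | h2
  · have : p₁ - 1 = 0 := by omega
    rw [this]
    simp
  · -- p₁ ≥ 2, so n := p₁ - 1 ≥ 1
    set n := p₁ - 1 with hn
    have hn1 : 1 ≤ n := by omega
    have hnle : n ≤ p - 1 := by omega
    have hterm : ∀ k ∈ Finset.Icc 1 n,
        (Nat.choose n k : ℝ) * (efact ((k : ℤ) - 3) : ℝ) *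
            (efact ((p : ℤ) - 1 - (k : ℤ)) : ℝ)
          ≤ (Nat.factorial (p-1) : ℝ) * ((efact ((k:ℤ)-3) : ℝ) / (Nat.factorial k : ℝ)) := by
      intro k hk
      simp only [Finset.mem_Icc] at hk
      have hkle : k ≤ p - 1 := le_trans hk.2 hnle
      have hep : efact ((p : ℤ) - 1 - (k : ℤ)) = Nat.factorial (p - 1 - k) := by
        have harg : (p : ℤ) - 1 - (k : ℤ) = ((p - 1 - k : ℕ) : ℤ) := by
          have : (1:ℕ) ≤ p := by omega
          push_cast [Nat.cast_sub hkle, Nat.cast_sub this]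
          ring
        rw [harg]
        simp [efact]
      rw [hep]
      have hnat : Nat.choose n k * (Nat.factorial k * Nat.factorial (p - 1 - k))
          ≤ Nat.factorial (p - 1) := by
        calc Nat.choose n k * (Nat.factorial k * Nat.factorial (p - 1 - k))
            ≤ Nat.choose (p-1) k * (Nat.factorial k * Nat.factorial (p - 1 - k)) := by
              exact Nat.mul_le_mul_right _ (Nat.choose_le_choose k hnle)
          _ = Nat.factorial (p-1) := by
              rw [← Nat.choose_mul_factorial_mul_factorial hkle]; ring
      have hcast := (Nat.cast_le (α := ℝ)).2 hnat
      push_cast at hcast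
      have hfk : (0:ℝ) < (Nat.factorial k : ℝ) := by positivity
      have hE : (0:ℝ) ≤ (efact ((k:ℤ)-3) : ℝ) := by positivity
      calc (Nat.choose n k : ℝ) * (efact ((k:ℤ)-3) : ℝ) * (Nat.factorial (p-1-k) : ℝ)
          = ((Nat.choose n k : ℝ) * (Nat.factorial (p-1-k) : ℝ)) * (efact ((k:ℤ)-3) : ℝ) := by ring
        _ ≤ ((Nat.factorial (p-1) : ℝ) / (Nat.factorial k : ℝ)) * (efact ((k:ℤ)-3) : ℝ) := by
              apply mul_le_mul_of_nonneg_right _ hE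
              rw [le_div_iff₀ hfk]
              nlinarith [hcast]
        _ = (Nat.factorial (p-1) : ℝ) * ((efact ((k:ℤ)-3) : ℝ) / (Nat.factorial k : ℝ)) := by ring
    calc ∑ k ∈ Finset.Icc 1 n,
          (Nat.choose n k : ℝ) * (efact ((k : ℤ) - 3) : ℝ) *
            (efact ((p : ℤ) - 1 - (k : ℤ)) : ℝ)
        ≤ ∑ k ∈ Finset.Icc 1 n,
            (Nat.factorial (p-1) : ℝ) * ((efact ((k:ℤ)-3) : ℝ) / (Nat.factorial k : ℝ)) :=
          Finset.sum_le_sum hterm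
      _ = (Nat.factorial (p-1) : ℝ) * ∑ k ∈ Finset.Icc 1 n,
            ((efact ((k:ℤ)-3) : ℝ) / (Nat.factorial k : ℝ)) := by rw [Finset.mul_sum]
      _ ≤ (Nat.factorial (p-1) : ℝ) * (2 - 1/(n:ℝ)) := by
          apply mul_le_mul_of_nonneg_left (efact_sum_le n hn1) (by positivity)
      _ ≤ 2 * (Nat.factorial (p-1) : ℝ) := by
          have : (0:ℝ) < (n:ℝ) := by exact_mod_cast hn1
          have h1 : (0:ℝ) ≤ 1/(n:ℝ) := by positivity
          nlinarith [(Nat.cast_pos (α := ℝ)).mpr (Nat.factorial_pos (p-1))]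
end
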